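/- arXiv:2103.08959 — 4 statements merged into one kernel-verified Lean document; each statement's English description precedes it below -/
import Mathlib

section
/- Let n ≥ 1 and let 1 > μ₁ > μ₂ > ⋯ > μ_{n+1} > 0. Then there exist constants C > 0 and c ∈ (0,1), depending only on μ₁,…,μ_{n+1}, such that for every m ≥ 1 and every choice of monic real polynomials p₁,…,p_m of degree n, each of the form p_i(x) = (x − λ₁^{(i)})⋯(x − λ_n^{(i)}) with μ_k ≥ λ_k^{(i)} ≥ μ_{k+1} for all k = 1,…,n, one has ‖F(p₁)F(p₂)⋯F(p_m)‖ ≤ C c^m, where ‖·‖ is the operator norm on n×n real matrices induced by the Euclidean norm. -/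
open Polynomial

/-- The Frobenius (companion-type) matrix of a monic polynomial
`p(z) = z^n + b_{n-1} z^{n-1} + ⋯ + b₀`: the first row is `(-b_{n-1}, …, -b₀)`,
the subdiagonal entries are `1`, and all other entries vanish. -/
noncomputable def frobeniusMatrix (n : ℕ) (p : Polynomial ℝ) : Matrix (Fin n) (Fin n) ℝ :=
  Matrix.of fun i j =>
    if (i : ℕ) = 0 then -p.coeff (n - 1 - (j : ℕ))
    else if (i : ℕ) = (j : ℕ) + 1 then 1 else 0

/-- The operator norm on `n × n` real matrices induced by the Euclidean norm. -/
noncomputable def matrixL2OpNorm {n : ℕ} (M : Matrix (Fin n) (Fin n) ℝ) : ℝ :=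
  ‖LinearMap.toContinuousLinearMap (Matrix.toEuclideanLin M)‖

/-! ### Auxiliary material: norms -/

open scoped Matrix.Norms.L2Operator in
lemma matrixL2OpNorm_eq {n : ℕ} (A : Matrix (Fin n) (Fin n) ℝ) : matrixL2OpNorm A = ‖A‖ := rfl

lemma matrixL2OpNorm_nonneg {n : ℕ} (A : Matrix (Fin n) (Fin n) ℝ) : 0 ≤ matrixL2OpNorm A :=
  norm_nonneg _

lemma matrixL2OpNorm_mul {n : ℕ} (A B : Matrix (Fin n) (Fin n) ℝ) :
    matrixL2OpNorm (A * B) ≤ matrixL2OpNorm A * matrixL2OpNorm B := by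
  simp only [matrixL2OpNorm_eq]; exact Matrix.l2_opNorm_mul A B

lemma euclid_abs_le {n : ℕ} (v : EuclideanSpace ℝ (Fin n)) (j : Fin n) : |v j| ≤ ‖v‖ := by
  rw [EuclideanSpace.norm_eq]
  rw [← Real.sqrt_sq (abs_nonneg (v j))]
  apply Real.sqrt_le_sqrt
  rw [sq_abs]
  exact Finset.single_le_sum (f := fun i => ‖v i‖ ^ 2) (fun i _ => by positivity)
    (Finset.mem_univ j) |>.trans_eq' (by simp [Real.norm_eq_abs, sq_abs])

lemma euclid_norm_le_sum {n : ℕ} (v : EuclideanSpace ℝ (Fin n)) : ‖v‖ ≤ ∑ i, |v i| := by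
  rw [EuclideanSpace.norm_eq]
  rw [← Real.sqrt_sq (Finset.sum_nonneg (fun i _ => abs_nonneg (v i)))]
  apply Real.sqrt_le_sqrt
  calc ∑ i, ‖v i‖ ^ 2 ≤ ∑ i, |v i| * ∑ j, |v j| := by
        apply Finset.sum_le_sum
        intro i _
        rw [Real.norm_eq_abs, sq]
        exact mul_le_mul_of_nonneg_left (Finset.single_le_sum (f := fun j => |v j|)
          (fun j _ => abs_nonneg _) (Finset.mem_univ i)) (abs_nonneg _)
    _ = (∑ i, |v i|) ^ 2 := by rw [← Finset.sum_mul, sq]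

lemma matrixL2OpNorm_le_sum {n : ℕ} (A : Matrix (Fin n) (Fin n) ℝ) :
    matrixL2OpNorm A ≤ ∑ i, ∑ j, |A i j| := by
  apply ContinuousLinearMap.opNorm_le_bound _ (by positivity)
  intro v
  have h1 : (LinearMap.toContinuousLinearMap (Matrix.toEuclideanLin A)) v
      = Matrix.toEuclideanLin A v := rfl
  rw [h1]
  refine (euclid_norm_le_sum _).trans ?_
  rw [Finset.sum_mul]
  apply Finset.sum_le_sum
  intro i _
  have h2 : (Matrix.toEuclideanLin A v) i = ∑ j, A i j * v j := rfl
  rw [h2]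
  calc |∑ j, A i j * v j| ≤ ∑ j, |A i j * v j| := Finset.abs_sum_le_sum_abs _ _
    _ ≤ ∑ j, |A i j| * ‖v‖ := by
        apply Finset.sum_le_sum; intro j _
        rw [abs_mul]
        exact mul_le_mul_of_nonneg_left (euclid_abs_le v j) (abs_nonneg _)
    _ = (∑ j, |A i j|) * ‖v‖ := by rw [Finset.sum_mul]

/-! ### Auxiliary material: Newton interpolation -/

open Finset

noncomputable def Nk (x : ℕ → ℝ) (k : ℕ) : Polynomial ℝ := ∏ l ∈ range k, (X - C (x l))

noncomputable def dd (x : ℕ → ℝ) (q : Polynomial ℝ) (k : ℕ) : ℝ :=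
  ∑ i ∈ range (k+1), q.eval (x i) / ∏ l ∈ (range (k+1)).erase i, (x i - x l)

lemma Nk_eval (x : ℕ → ℝ) (k : ℕ) (y : ℝ) : (Nk x k).eval y = ∏ l ∈ range k, (y - x l) := by
  simp [Nk, eval_prod]

lemma Nk_monic (x : ℕ → ℝ) (k : ℕ) : (Nk x k).Monic :=
  monic_prod_of_monic _ _ (fun l _ => monic_X_sub_C _)

lemma Nk_natDegree (x : ℕ → ℝ) (k : ℕ) : (Nk x k).natDegree = k := by
  rw [Nk, natDegree_prod_of_monic _ _ (fun l _ => monic_X_sub_C _)]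
  simp

section Newton
variable {n : ℕ} (x : ℕ → ℝ) (hx : ∀ i j : ℕ, i < j → j < n → x j < x i)
include hx

lemma x_sub_ne (i l : ℕ) (hi : i < n) (hl : l < n) (hne : l ≠ i) : x i - x l ≠ 0 := by
  rcases lt_or_gt_of_ne hne with h | h
  · exact ne_of_lt (sub_neg.2 (hx l i h hi))
  · exact ne_of_gt (sub_pos.2 (hx i l h hl))

lemma denom_ne (i K : ℕ) (hi : i < n) (hK : K < n) :
    ∏ l ∈ (range (K+1)).erase i, (x i - x l) ≠ 0 := by
  apply Finset.prod_ne_zero_iff.2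
  intro l hl
  rw [Finset.mem_erase, Finset.mem_range] at hl
  exact x_sub_ne x hx i l hi (by omega) hl.1

lemma telescope (i r : ℕ) (hr : r < n) (hir : i ≤ r) :
    ∀ K, i ≤ K → K ≤ r →
    ∑ k ∈ Finset.Icc i K,
        (Nk x k).eval (x r) / ∏ l ∈ (range (k+1)).erase i, (x i - x l)
      = (∏ l ∈ (range (K+1)).erase i, (x r - x l)) /
        (∏ l ∈ (range (K+1)).erase i, (x i - x l)) := by
  intro K
  induction K with
  | zero =>
    intro h1 h2
    interval_cases i
    simp [Nk_eval]
  | succ K ih =>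
    intro h1 h2
    rcases Nat.eq_or_lt_of_le h1 with h | h
    · subst h
      rw [Finset.Icc_self, Finset.sum_singleton, Nk_eval]
      congr 1
      apply Finset.prod_congr
      · ext l; simp only [Finset.mem_erase, Finset.mem_range]; omega
      · intros; rfl
    · have hiK : i ≤ K := by omega
      have hKr : K ≤ r := by omega
      rw [Finset.sum_Icc_succ_top h1, ih hiK hKr]
      have hset : (range (K+1+1)).erase i = insert (K+1) ((range (K+1)).erase i) := by
        ext l; simp only [Finset.mem_erase, Finset.mem_range, Finset.mem_insert]; omega
      have hnotmem : (K+1) ∉ (range (K+1)).erase i := by simp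
      rw [hset, Finset.prod_insert hnotmem, Finset.prod_insert hnotmem]
      have hNk : (Nk x (K+1)).eval (x r)
          = (x r - x i) * ∏ l ∈ (range (K+1)).erase i, (x r - x l) := by
        rw [Nk_eval]
        exact (Finset.mul_prod_erase _ _ (by simp; omega)).symm
      rw [hNk]
      have hB : ∏ l ∈ (range (K+1)).erase i, (x i - x l) ≠ 0 :=
        denom_ne x hx i K (by omega) (by omega)
      have hiK1 : x i - x (K+1) ≠ 0 := x_sub_ne x hx i (K+1) (by omega) (by omega) (by omega)
      field_simp
      ring

lemma eval_identity (q : Polynomial ℝ) (r : ℕ) (hr : r < n) :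
    ∑ k ∈ range n, dd x q k * (Nk x k).eval (x r) = q.eval (x r) := by
  have hsub : range (r+1) ⊆ range n := by
    intro l hl; simp only [Finset.mem_range] at *; omega
  rw [← Finset.sum_subset hsub ?vanish]
  case vanish =>
    intro k hk hk2
    simp only [Finset.mem_range] at hk hk2
    have : (Nk x k).eval (x r) = 0 := by
      rw [Nk_eval]
      exact Finset.prod_eq_zero (i := r) (Finset.mem_range.2 (by omega)) (by ring)
    rw [this, mul_zero]
  have expand : ∀ k ∈ range (r+1), dd x q k * (Nk x k).eval (x r)
      = ∑ i ∈ range (k+1), q.eval (x i) *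
          ((Nk x k).eval (x r) / ∏ l ∈ (range (k+1)).erase i, (x i - x l)) := by
    intro k _
    rw [dd, Finset.sum_mul]
    apply Finset.sum_congr rfl
    intro i _
    ring
  rw [Finset.sum_congr rfl expand]
  rw [Finset.sum_comm' (t' := range (r+1)) (s' := fun i => Finset.Icc i r)
    (by intro k i; simp only [Finset.mem_range, Finset.mem_Icc]; omega)]
  have inner : ∀ i ∈ range (r+1),
      ∑ k ∈ Finset.Icc i r, q.eval (x i) *
          ((Nk x k).eval (x r) / ∏ l ∈ (range (k+1)).erase i, (x i - x l))
      = if i = r then q.eval (x r) else 0 := by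
    intro i hi
    rw [Finset.mem_range] at hi
    rw [← Finset.mul_sum, telescope x hx i r hr (by omega) r (by omega) le_rfl]
    by_cases h : i = r
    · rw [if_pos h, h, div_self (denom_ne x hx r r hr hr), mul_one]
    · rw [if_neg h]
      have : ∏ l ∈ (range (r+1)).erase i, (x r - x l) = 0 :=
        Finset.prod_eq_zero (i := r)
          (by simp only [Finset.mem_erase, Finset.mem_range]; omega) (by ring)
      rw [this, zero_div, mul_zero]
  rw [Finset.sum_congr rfl inner]
  simp

lemma newton_expansion (hn : 1 ≤ n) (q : Polynomial ℝ) (hq : q.natDegree < n) :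
    q = ∑ k ∈ range n, C (dd x q k) * Nk x k := by
  have hdeg : (q - ∑ k ∈ range n, C (dd x q k) * Nk x k).natDegree < n := by
    apply lt_of_le_of_lt (Polynomial.natDegree_sub_le _ _)
    apply max_lt hq
    apply lt_of_le_of_lt (Polynomial.natDegree_sum_le _ _)
    rw [Finset.fold_max_lt]
    constructor
    · omega
    · intro k hk
      simp only [Function.comp_apply]
      apply lt_of_le_of_lt (Polynomial.natDegree_mul_le)
      rw [Polynomial.natDegree_C, Nk_natDegree]
      simp only [Finset.mem_range] at hk
      omega
  have hinj : Function.Injective (fun i : Fin n => x i) := by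
    intro a b hab
    simp only at hab
    by_contra hne
    rcases lt_or_gt_of_ne (fun h : (a:ℕ) = (b:ℕ) => hne (Fin.ext h)) with h | h
    · exact absurd hab (hx a b h b.isLt).ne'
    · exact absurd hab (hx b a h a.isLt).ne
  have hz := Polynomial.eq_zero_of_natDegree_lt_card_of_eval_eq_zero
    (q - ∑ k ∈ range n, C (dd x q k) * Nk x k) hinj ?_ (by simpa using hdeg)
  · exact sub_eq_zero.1 hz
  · intro i
    rw [Polynomial.eval_sub, sub_eq_zero]
    rw [Polynomial.eval_finset_sum]
    simp only [Polynomial.eval_mul, Polynomial.eval_C]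
    exact (eval_identity x hx q i i.isLt).symm

lemma dd_nonneg (q : Polynomial ℝ) (k : ℕ) (hk : k < n)
    (hsign : ∀ i, i ≤ k → 0 ≤ (-1 : ℝ)^i * q.eval (x i)) : 0 ≤ dd x q k := by
  apply Finset.sum_nonneg
  intro i hi
  rw [Finset.mem_range] at hi
  have hi' : i ≤ k := by omega
  have hin : i < n := by omega
  set B := ∏ l ∈ (range (k+1)).erase i, (x i - x l) with hB
  have hsplit : (range (k+1)).erase i = (range i) ∪ Finset.Ioc i k := by
    ext l; simp only [Finset.mem_erase, Finset.mem_range, Finset.mem_union, Finset.mem_Ioc]; omega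
  have hdisj : Disjoint (range i) (Finset.Ioc i k) := by
    rw [Finset.disjoint_left]; intro l h1 h2
    simp only [Finset.mem_range] at h1
    simp only [Finset.mem_Ioc] at h2
    omega
  have h1 : ∏ l ∈ range i, (x i - x l) = (-1:ℝ)^i * ∏ l ∈ range i, (x l - x i) := by
    have hc : ∀ l ∈ range i, (x i - x l) = (-1:ℝ) * (x l - x i) := by intro l _; ring
    rw [Finset.prod_congr rfl hc, Finset.prod_mul_distrib, Finset.prod_const, Finset.card_range]
  have h2 : 0 < ∏ l ∈ range i, (x l - x i) := by
    apply Finset.prod_pos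
    intro l hl
    rw [Finset.mem_range] at hl
    exact sub_pos.2 (hx l i hl hin)
  have h3 : 0 < ∏ l ∈ Finset.Ioc i k, (x i - x l) := by
    apply Finset.prod_pos
    intro l hl
    rw [Finset.mem_Ioc] at hl
    exact sub_pos.2 (hx i l hl.1 (by omega))
  have hs : ((-1:ℝ)^i) * ((-1:ℝ)^i) = 1 := by
    rw [← pow_add]
    exact Even.neg_one_pow ⟨i, rfl⟩
  have hBpos : 0 < (-1:ℝ)^i * B := by
    rw [hB, hsplit, Finset.prod_union hdisj, h1, ← mul_assoc, ← mul_assoc, hs, one_mul]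
    exact mul_pos h2 h3
  have hrw : q.eval (x i) / B = ((-1:ℝ)^i * q.eval (x i)) / ((-1:ℝ)^i * B) := by
    rw [mul_div_mul_left _ _ (by positivity : ((-1:ℝ)^i) ≠ 0)]
  rw [hrw]
  exact div_nonneg (hsign i hi') hBpos.le
end Newton

lemma fin_sum_ite {n : ℕ} (c : ℕ) (f : Fin n → ℝ) :
    ∑ j : Fin n, (if (j:ℕ) = c then f j else 0) = if h : c < n then f ⟨c, h⟩ else 0 := by
  split
  · next h =>
    rw [Finset.sum_eq_single_of_mem ⟨c, h⟩ (Finset.mem_univ _)]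
    · simp
    · intro b _ hb
      rw [if_neg (fun hc => hb (Fin.ext hc))]
  · next h =>
    exact Finset.sum_eq_zero (fun j _ => by rw [if_neg (by omega)])
lemma key_lemma (n : ℕ) (hn : 1 ≤ n) (v : ℕ → ℝ) (t : ℝ)
    (hvanti : ∀ i j : ℕ, i < j → j < n → v j < v i)
    (hvpos : ∀ k, k < n → 0 < v k)
    (hvt : ∀ k, k < n → v k < t)
    (lam : Fin n → ℝ)
    (hlam1 : ∀ k : Fin n, v (k:ℕ) ≤ lam k)
    (hlam2 : ∀ k : Fin n, lam k < t)
    (hlam3 : ∀ k : Fin n, 0 < (k:ℕ) → lam k ≤ v ((k:ℕ)-1)) :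
    ∃ M : Matrix (Fin n) (Fin n) ℝ,
      (∀ k i : Fin n, 0 ≤ M k i) ∧
      (∀ i : Fin n, ∑ k : Fin n, (Nk v (k:ℕ)).eval t * M k i ≤ t * (Nk v (i:ℕ)).eval t) ∧
      (∀ i j : Fin n,
        ∑ k : Fin n, (Nk v (i:ℕ)).coeff (n-1-(k:ℕ)) * frobeniusMatrix n (∏ k, (X - C (lam k))) k j
          = ∑ k : Fin n, M k i * (Nk v (k:ℕ)).coeff (n-1-(j:ℕ))) := by
  classical
  set p : Polynomial ℝ := ∏ k, (X - C (lam k)) with hp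
  have hpmonic : p.Monic := monic_prod_of_monic _ _ (fun k _ => monic_X_sub_C _)
  have hpdeg : p.natDegree = n := by
    rw [hp, natDegree_prod_of_monic _ _ (fun k _ => monic_X_sub_C _)]
    simp
  set q : Polynomial ℝ := Nk v n - p with hq
  set d : ℕ → ℝ := dd v q with hd
  have hvmono : ∀ a b : ℕ, a ≤ b → b < n → v b ≤ v a := by
    intro a b hab hbn
    rcases Nat.eq_or_lt_of_le hab with h | h
    · rw [h]
    · exact (hvanti a b h hbn).le
  -- degree of q
  have hqdeg : q.natDegree < n := by
    rcases eq_or_ne q 0 with h | h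
    · rw [h]; simpa using (show 0 < n by omega)
    · rw [Polynomial.natDegree_lt_iff_degree_lt h]
      have h1 : (Nk v n).degree = (n : ℕ) := by
        rw [Polynomial.degree_eq_natDegree (Nk_monic v n).ne_zero, Nk_natDegree]
      have h2 : p.degree = (n : ℕ) := by
        rw [Polynomial.degree_eq_natDegree hpmonic.ne_zero, hpdeg]
      have := Polynomial.degree_sub_lt (h1.trans h2.symm) (Nk_monic v n).ne_zero
        ((Nk_monic v n).leadingCoeff.trans hpmonic.leadingCoeff.symm)
      rw [← hq] at this
      exact lt_of_lt_of_eq this h1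
  have hNexp : q = ∑ k ∈ range n, C (d k) * Nk v k := newton_expansion v hvanti hn q hqdeg
  have hXN : ∀ k : ℕ, X * Nk v k = Nk v (k+1) + C (v k) * Nk v k := by
    intro k
    rw [Nk, Nk, Finset.prod_range_succ, ← Nk]
    ring
  -- q evaluated at nodes
  have hqnode : ∀ i : ℕ, i < n → q.eval (v i) = -p.eval (v i) := by
    intro i hi
    rw [hq, Polynomial.eval_sub, Nk_eval]
    rw [Finset.prod_eq_zero (Finset.mem_range.2 hi) (by ring : v i - v i = 0)]
    ring
  -- sign of p at nodes
  have hsign : ∀ i, i < n → 0 ≤ (-1 : ℝ)^i * q.eval (v i) := by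
    intro i hi
    have hpe : p.eval (v i) = ∏ k : Fin n, (v i - lam k) := by
      rw [hp, Polynomial.eval_prod]
      simp
    set s1 : Finset (Fin n) := univ.filter (fun k : Fin n => (k:ℕ) ≤ i) with hs1
    have hcard : s1.card = i + 1 := by
      rw [hs1]
      apply Finset.card_eq_of_bijective (fun m hm => (⟨m, by omega⟩ : Fin n))
      · intro a ha
        simp only [Finset.mem_filter, Finset.mem_univ, true_and] at ha
        exact ⟨(a:ℕ), by omega, by simp⟩
      · intro m hm
        simp only [Finset.mem_filter, Finset.mem_univ, true_and]
        omega
      · intro a b ha hb hab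
        simpa [Fin.ext_iff] using hab
    have hsplit : ∏ k : Fin n, (v i - lam k) =
        (∏ k ∈ s1, (v i - lam k)) * ∏ k ∈ univ.filter (fun k : Fin n => ¬ ((k:ℕ) ≤ i)), (v i - lam k) :=
      (Finset.prod_filter_mul_prod_filter_not univ _ _).symm
    have h1 : ∏ k ∈ s1, (v i - lam k) = (-1:ℝ)^(i+1) * ∏ k ∈ s1, (lam k - v i) := by
      have hc : ∀ k ∈ s1, (v i - lam k) = (-1:ℝ) * (lam k - v i) := by intro k _; ring
      rw [Finset.prod_congr rfl hc, Finset.prod_mul_distrib, Finset.prod_const, hcard]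
    have hA : 0 ≤ ∏ k ∈ s1, (lam k - v i) := by
      apply Finset.prod_nonneg
      intro k hk
      rw [hs1, Finset.mem_filter] at hk
      have : v i ≤ v (k:ℕ) := hvmono (k:ℕ) i hk.2 hi
      have := hlam1 k
      linarith
    have hB : 0 ≤ ∏ k ∈ univ.filter (fun k : Fin n => ¬ ((k:ℕ) ≤ i)), (v i - lam k) := by
      apply Finset.prod_nonneg
      intro k hk
      rw [Finset.mem_filter] at hk
      have hki : i < (k:ℕ) := by omega
      have h3 := hlam3 k (by omega)
      have h4 : v ((k:ℕ)-1) ≤ v i := hvmono i ((k:ℕ)-1) (by omega) (by have := k.isLt; omega)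
      linarith
    have hs : ((-1:ℝ)^i) * ((-1:ℝ)^i) = 1 := by
      rw [← pow_add]; exact Even.neg_one_pow ⟨i, rfl⟩
    have key : (-1 : ℝ)^i * q.eval (v i) =
        (∏ k ∈ s1, (lam k - v i)) * ∏ k ∈ univ.filter (fun k : Fin n => ¬ ((k:ℕ) ≤ i)), (v i - lam k) := by
      rw [hqnode i hi, hpe, hsplit, h1, pow_succ]
      linear_combination (∏ k ∈ s1, (lam k - v i)) *
        (∏ k ∈ univ.filter (fun k : Fin n => ¬ ((k:ℕ) ≤ i)), (v i - lam k)) * hs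
    rw [key]
    exact mul_nonneg hA hB
  have hdnn : ∀ k : ℕ, k < n → 0 ≤ d k := by
    intro k hk
    exact dd_nonneg v hvanti q k hk (fun i hi => hsign i (by omega))
  -- the matrix M
  refine ⟨Matrix.of fun k i =>
      (if (k:ℕ) = (i:ℕ) then v (i:ℕ) else 0) + (if (k:ℕ) = (i:ℕ)+1 then 1 else 0)
        + (if (i:ℕ) = n-1 then d (k:ℕ) else 0), ?_, ?_, ?_⟩
  · intro k i
    simp only [Matrix.of_apply]
    have h1 : (0:ℝ) ≤ if (k:ℕ) = (i:ℕ) then v (i:ℕ) else 0 := by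
      split
      · exact (hvpos _ i.isLt).le
      · exact le_rfl
    have h2 : (0:ℝ) ≤ if (k:ℕ) = (i:ℕ)+1 then (1:ℝ) else 0 := by split <;> norm_num
    have h3 : (0:ℝ) ≤ if (i:ℕ) = n-1 then d (k:ℕ) else 0 := by
      split
      · exact hdnn _ k.isLt
      · exact le_rfl
    linarith
  · -- row sums
    intro i
    set w : ℕ → ℝ := fun j => (Nk v j).eval t with hw
    have hwsucc : ∀ j : ℕ, w (j+1) = w j * (t - v j) := by
      intro j
      rw [hw]
      simp only [Nk_eval, Finset.prod_range_succ]
    have hqevalt : ∑ k : Fin n, w (k:ℕ) * d (k:ℕ) = q.eval t := by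
      conv_rhs => rw [hNexp]
      rw [Polynomial.eval_finset_sum, ← Fin.sum_univ_eq_sum_range
        (fun k => (C (d k) * Nk v k).eval t)]
      apply Finset.sum_congr rfl
      intro k _
      simp only [Polynomial.eval_mul, Polynomial.eval_C]
      ring
    have hpt : 0 < p.eval t := by
      rw [hp, Polynomial.eval_prod]
      apply Finset.prod_pos
      intro k _
      simp only [Polynomial.eval_sub, Polynomial.eval_X, Polynomial.eval_C]
      linarith [hlam2 k]
    have hterm : ∀ k : Fin n, w (k:ℕ) * (Matrix.of (fun k i : Fin n =>
        (if (k:ℕ) = (i:ℕ) then v (i:ℕ) else 0) + (if (k:ℕ) = (i:ℕ)+1 then 1 else 0)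
          + (if (i:ℕ) = n-1 then d (k:ℕ) else 0))) k i
        = (if (k:ℕ) = (i:ℕ) then w (k:ℕ) * v (i:ℕ) else 0)
          + (if (k:ℕ) = (i:ℕ)+1 then w (k:ℕ) else 0)
          + (if (i:ℕ) = n-1 then w (k:ℕ) * d (k:ℕ) else 0) := by
      intro k
      simp only [Matrix.of_apply, mul_add, mul_ite, mul_zero, mul_one]
    rw [Finset.sum_congr rfl (fun k _ => hterm k), Finset.sum_add_distrib,
      Finset.sum_add_distrib, fin_sum_ite, fin_sum_ite]
    have h3 : ∑ k : Fin n, (if (i:ℕ) = n-1 then w (k:ℕ) * d (k:ℕ) else 0)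
        = if (i:ℕ) = n-1 then q.eval t else 0 := by
      by_cases hi : (i:ℕ) = n-1
      · simp only [if_pos hi]
        exact hqevalt
      · simp only [if_neg hi, Finset.sum_const_zero]
    rw [h3, dif_pos i.isLt]
    by_cases hi : (i:ℕ) = n-1
    · rw [dif_neg (by omega), if_pos hi]
      have hqt : q.eval t = w n - p.eval t := by
        rw [hq, Polynomial.eval_sub, hw]
      have hwn : w n = w (n-1) * (t - v (n-1)) := by
        have := hwsucc (n-1)
        rwa [show n-1+1 = n from by omega] at this
      rw [hqt, hwn]
      simp only [hi]
      linarith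
    · rw [dif_pos (show (i:ℕ)+1 < n from by have := i.isLt; omega), if_neg hi]
      have := hwsucc (i:ℕ)
      simp only [Fin.val_natCast]
      linarith [this]
  · -- the intertwining identity
    intro i j
    have hqcoeff : ∀ c : ℕ, q.coeff c = ∑ k : Fin n, d (k:ℕ) * (Nk v (k:ℕ)).coeff c := by
      intro c
      conv_lhs => rw [hNexp]
      rw [Polynomial.finset_sum_coeff, ← Fin.sum_univ_eq_sum_range
        (fun k => (C (d k) * Nk v k).coeff c)]
      exact Finset.sum_congr rfl (fun k _ => by rw [Polynomial.coeff_C_mul])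
    have hterm : ∀ k : Fin n, (Nk v (i:ℕ)).coeff (n-1-(k:ℕ)) * frobeniusMatrix n p k j
        = (if (k:ℕ) = 0 then (Nk v (i:ℕ)).coeff (n-1) * (-p.coeff (n-1-(j:ℕ))) else 0)
          + (if (k:ℕ) = (j:ℕ)+1 then (Nk v (i:ℕ)).coeff (n-1-(k:ℕ)) else 0) := by
      intro k
      by_cases h0 : (k:ℕ) = 0
      · rw [if_pos h0, if_neg (by omega), add_zero]
        simp [frobeniusMatrix, h0]
      · rw [if_neg h0]
        by_cases h1 : (k:ℕ) = (j:ℕ)+1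
        · rw [if_pos h1, zero_add]
          simp [frobeniusMatrix, h0, h1]
        · rw [if_neg h1]
          simp [frobeniusMatrix, h0, h1]
    have hterm2 : ∀ k : Fin n, (Matrix.of (fun k i : Fin n =>
        (if (k:ℕ) = (i:ℕ) then v (i:ℕ) else 0) + (if (k:ℕ) = (i:ℕ)+1 then 1 else 0)
          + (if (i:ℕ) = n-1 then d (k:ℕ) else 0))) k i * (Nk v (k:ℕ)).coeff (n-1-(j:ℕ))
        = (if (k:ℕ) = (i:ℕ) then v (i:ℕ) * (Nk v (k:ℕ)).coeff (n-1-(j:ℕ)) else 0)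
          + (if (k:ℕ) = (i:ℕ)+1 then (Nk v (k:ℕ)).coeff (n-1-(j:ℕ)) else 0)
          + (if (i:ℕ) = n-1 then d (k:ℕ) * (Nk v (k:ℕ)).coeff (n-1-(j:ℕ)) else 0) := by
      intro k
      simp only [Matrix.of_apply, add_mul, ite_mul, zero_mul, one_mul]
    rw [Finset.sum_congr rfl (fun k _ => hterm k), Finset.sum_add_distrib, fin_sum_ite, fin_sum_ite,
      Finset.sum_congr rfl (fun k _ => hterm2 k), Finset.sum_add_distrib, Finset.sum_add_distrib,
      fin_sum_ite, fin_sum_ite]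
    have h3 : ∑ k : Fin n, (if (i:ℕ) = n-1 then d (k:ℕ) * (Nk v (k:ℕ)).coeff (n-1-(j:ℕ)) else 0)
        = if (i:ℕ) = n-1 then q.coeff (n-1-(j:ℕ)) else 0 := by
      by_cases hi : (i:ℕ) = n-1
      · simp only [if_pos hi]
        exact (hqcoeff _).symm
      · simp only [if_neg hi, Finset.sum_const_zero]
    rw [h3, dif_pos (show (0:ℕ) < n from by omega), dif_pos i.isLt]
    set c := n-1-(j:ℕ) with hc
    have hXc : (X * Nk v (i:ℕ)).coeff c = (Nk v ((i:ℕ)+1)).coeff c + v (i:ℕ) * (Nk v (i:ℕ)).coeff c := by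
      rw [hXN (i:ℕ)]
      simp [Polynomial.coeff_add, Polynomial.coeff_C_mul]
    have hqc : q.coeff c = (Nk v n).coeff c - p.coeff c := by
      rw [hq, Polynomial.coeff_sub]
    by_cases hj : (j:ℕ)+1 < n
    case pos =>
      have hLX : (Nk v (i:ℕ)).coeff (n-1-((j:ℕ)+1)) = (X * Nk v (i:ℕ)).coeff c := by
        have he : c = (n-1-((j:ℕ)+1)) + 1 := by have := j.isLt; omega
        rw [he, Polynomial.coeff_X_mul]
      rw [dif_pos hj]
      by_cases hi : (i:ℕ) = n-1
      · have hik : (i:ℕ)+1 = n := by have := i.isLt; omega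
        have htop : (Nk v (i:ℕ)).coeff (n-1) = 1 := by
          have h := (Nk_monic v (i:ℕ)).coeff_natDegree
          rw [Nk_natDegree] at h
          rw [show n-1 = (i:ℕ) from by omega]
          exact h
        rw [dif_neg (by omega), if_pos hi, htop, hqc]
        rw [hik] at hXc
        simp only [Fin.val_natCast] at hLX hXc ⊢
        linarith [hLX, hXc]
      · have htop : (Nk v (i:ℕ)).coeff (n-1) = 0 :=
          Polynomial.coeff_eq_zero_of_natDegree_lt (by rw [Nk_natDegree]; omega)
        rw [dif_pos (show (i:ℕ)+1 < n from by have := i.isLt; omega), if_neg hi, htop]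
        simp only [Fin.val_natCast] at hLX hXc ⊢
        linarith [hLX, hXc]
    case neg =>
      have hc0 : c = 0 := by have := j.isLt; omega
      have hLX : (0:ℝ) = (X * Nk v (i:ℕ)).coeff c := by
        rw [hc0, Polynomial.mul_coeff_zero, Polynomial.coeff_X_zero, zero_mul]
      rw [dif_neg hj]
      by_cases hi : (i:ℕ) = n-1
      · have hik : (i:ℕ)+1 = n := by have := i.isLt; omega
        have htop : (Nk v (i:ℕ)).coeff (n-1) = 1 := by
          have h := (Nk_monic v (i:ℕ)).coeff_natDegree
          rw [Nk_natDegree] at h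
          rw [show n-1 = (i:ℕ) from by omega]
          exact h
        rw [dif_neg (by omega), if_pos hi, htop, hqc]
        rw [hik] at hXc
        linarith [hLX, hXc]
      · have htop : (Nk v (i:ℕ)).coeff (n-1) = 0 :=
          Polynomial.coeff_eq_zero_of_natDegree_lt (by rw [Nk_natDegree]; omega)
        rw [dif_pos (show (i:ℕ)+1 < n from by have := i.isLt; omega), if_neg hi, htop]
        linarith [hLX, hXc]

lemma conj_ofFn_prod {n m : ℕ} (Q : Matrix (Fin n) (Fin n) ℝ)
    (f g : Fin m → Matrix (Fin n) (Fin n) ℝ) (h : ∀ i, Q * f i = g i * Q) :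
    Q * (List.ofFn f).prod = (List.ofFn g).prod * Q := by
  induction m with
  | zero => simp
  | succ m ih =>
    rw [List.ofFn_succ, List.ofFn_succ, List.prod_cons, List.prod_cons,
      ← mul_assoc, h 0, mul_assoc,
      ih (fun i => f i.succ) (fun i => g i.succ) (fun i => h i.succ), ← mul_assoc]

lemma rowsum_prod {n : ℕ} {t : ℝ} (ht : 0 ≤ t) :
    ∀ l : List (Matrix (Fin n) (Fin n) ℝ),
      (∀ A ∈ l, ∀ a : Fin n, ∑ b : Fin n, |A a b| ≤ t) →
      ∀ a : Fin n, ∑ b : Fin n, |l.prod a b| ≤ t ^ l.length := by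
  intro l
  induction l with
  | nil =>
    intro _ a
    simp only [List.prod_nil, List.length_nil, pow_zero]
    have habs : ∀ b : Fin n, |(1 : Matrix (Fin n) (Fin n) ℝ) a b|
        = if (b:ℕ) = (a:ℕ) then 1 else 0 := by
      intro b
      rw [Matrix.one_apply]
      by_cases h : a = b
      · rw [if_pos h, if_pos (by rw [h]), abs_one]
      · rw [if_neg h, if_neg (fun hc => h (Fin.ext hc.symm)), abs_zero]
    rw [Finset.sum_congr rfl (fun b _ => habs b), fin_sum_ite, dif_pos a.isLt]
  | cons A l ih =>
    intro hmem a
    rw [List.prod_cons, List.length_cons]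
    have hAl : ∀ B ∈ l, ∀ a : Fin n, ∑ b : Fin n, |B a b| ≤ t :=
      fun B hB => hmem B (List.mem_cons_of_mem _ hB)
    calc ∑ b, |(A * l.prod) a b| ≤ ∑ b : Fin n, ∑ k : Fin n, |A a k| * |l.prod k b| := by
          apply Finset.sum_le_sum; intro b _
          rw [Matrix.mul_apply]
          refine (Finset.abs_sum_le_sum_abs _ _).trans ?_
          apply Finset.sum_le_sum; intro k _; rw [abs_mul]
      _ = ∑ k : Fin n, |A a k| * ∑ b : Fin n, |l.prod k b| := by
          rw [Finset.sum_comm]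
          exact Finset.sum_congr rfl (fun k _ => (Finset.mul_sum _ _ _).symm)
      _ ≤ ∑ k : Fin n, |A a k| * t ^ l.length :=
          Finset.sum_le_sum (fun k _ => mul_le_mul_of_nonneg_left (ih hAl k) (abs_nonneg _))
      _ = (∑ k : Fin n, |A a k|) * t ^ l.length := (Finset.sum_mul _ _ _).symm
      _ ≤ t * t ^ l.length :=
          mul_le_mul_of_nonneg_right (hmem A List.mem_cons_self a) (pow_nonneg ht _)
      _ = t ^ (l.length + 1) := (pow_succ' t _).symm

/-- **Frobenius matrices lemma.** If `1 > μ₁ > ⋯ > μ_{n+1} > 0`, then there are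
`C > 0` and `c ∈ (0,1)`, depending only on the `μ`'s, such that for any monic polynomials
`p₁, …, p_m` whose zeroes interlace the `μ_k`'s, `‖F(p₁)⋯F(p_m)‖ ≤ C cᵐ`. -/
theorem frobenius_product_contraction (n : ℕ) (hn : 1 ≤ n) (μ : Fin (n + 1) → ℝ)
    (hμ1 : μ 0 < 1) (hμpos : 0 < μ (Fin.last n)) (hμanti : StrictAnti μ) :
    ∃ C c : ℝ, 0 < C ∧ 0 < c ∧ c < 1 ∧
      ∀ m : ℕ, 1 ≤ m → ∀ lam : Fin m → Fin n → ℝ,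
        (∀ i k, lam i k ≤ μ k.castSucc ∧ μ k.succ ≤ lam i k) →
        matrixL2OpNorm
            ((List.ofFn fun i : Fin m =>
              frobeniusMatrix n (∏ k, (X - Polynomial.C (lam i k)))).prod) ≤
          C * c ^ m := by
  classical
  have h0last : (0 : Fin (n+1)) < Fin.last n := by
    rw [Fin.lt_def]
    simp only [Fin.val_zero, Fin.val_last]
    omega
  have hμ0pos : 0 < μ 0 := hμpos.trans (hμanti h0last)
  set t : ℝ := (μ 0 + 1)/2 with ht
  have ht0 : 0 < t := by rw [ht]; linarith
  have ht1 : t < 1 := by rw [ht]; linarith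
  have hμ0t : μ 0 < t := by rw [ht]; linarith
  set v : ℕ → ℝ := fun k => if h : k < n then μ ⟨k+1, by omega⟩ else 0 with hv
  have hveq : ∀ k, ∀ h : k < n, v k = μ ⟨k+1, by omega⟩ := by
    intro k h
    simp only [hv]
    rw [dif_pos h]
  have hveq0 : ∀ k, ¬ (k < n) → v k = 0 := by
    intro k h
    simp only [hv]
    rw [dif_neg h]
  have hvanti : ∀ i j : ℕ, i < j → j < n → v j < v i := by
    intro i j hij hjn
    rw [hveq i (by omega), hveq j hjn]
    exact hμanti (Fin.mk_lt_mk.2 (by omega))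
  have hvpos : ∀ k, k < n → 0 < v k := by
    intro k hk
    rw [hveq k hk]
    exact hμpos.trans_le (hμanti.antitone (Fin.le_last _))
  have hvt : ∀ k, k < n → v k < t := by
    intro k hk
    rw [hveq k hk]
    have h2 : μ ⟨k+1, by omega⟩ ≤ μ 0 := hμanti.antitone (Fin.zero_le _)
    linarith
  have hwpos : ∀ j : ℕ, 0 < (Nk v j).eval t := by
    intro j
    rw [Nk_eval]
    apply Finset.prod_pos
    intro l _
    by_cases hl : l < n
    · linarith [hvt l hl]
    · rw [hveq0 l hl]; linarith
  set P : Matrix (Fin n) (Fin n) ℝ :=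
    Matrix.of (fun i j : Fin n => (Nk v (j:ℕ)).coeff (n-1-(i:ℕ))) with hP
  set Q : Matrix (Fin n) (Fin n) ℝ :=
    Matrix.of (fun i j : Fin n => ((Nk v (i:ℕ)).eval t)⁻¹ * P j i) with hQ
  have hdetP : P.det ≠ 0 := by
    have hlow : (P.submatrix id ⇑Fin.revPerm).BlockTriangular OrderDual.toDual := by
      intro i j hij
      have hij' : i < j := hij
      simp only [Matrix.submatrix_apply, id_eq, hP, Matrix.of_apply, Fin.revPerm_apply]
      apply Polynomial.coeff_eq_zero_of_natDegree_lt
      rw [Nk_natDegree, Fin.val_rev]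
      have h1 : (i:ℕ) < (j:ℕ) := hij'
      have := j.isLt
      omega
    have hd1 : (P.submatrix id ⇑Fin.revPerm).det = 1 := by
      rw [Matrix.det_of_lowerTriangular _ hlow]
      apply Finset.prod_eq_one
      intro i _
      simp only [Matrix.submatrix_apply, id_eq, hP, Matrix.of_apply, Fin.revPerm_apply]
      have h := (Nk_monic v ((Fin.rev i : Fin n):ℕ)).coeff_natDegree
      rw [Nk_natDegree] at h
      rw [show n-1-(i:ℕ) = ((Fin.rev i : Fin n):ℕ) from by rw [Fin.val_rev]; omega]
      exact h
    intro h0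
    have hperm := Matrix.det_permute' Fin.revPerm P
    rw [h0, mul_zero, hd1] at hperm
    exact one_ne_zero hperm
  have hQfact : Q = Matrix.diagonal (fun i : Fin n => ((Nk v (i:ℕ)).eval t)⁻¹) * P.transpose := by
    ext i j
    rw [Matrix.diagonal_mul, Matrix.transpose_apply]
    rfl
  have hdetQ : IsUnit Q.det := by
    rw [hQfact, Matrix.det_mul, Matrix.det_transpose, Matrix.det_diagonal]
    apply isUnit_iff_ne_zero.2
    apply mul_ne_zero
    · exact Finset.prod_ne_zero_iff.2 (fun i _ => inv_ne_zero (hwpos (i:ℕ)).ne')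
    · exact hdetP
  have hQQ' : Q⁻¹ * Q = 1 := Matrix.nonsing_inv_mul Q hdetQ
  refine ⟨matrixL2OpNorm Q⁻¹ * matrixL2OpNorm Q * n + 1, t, ?_, ht0, ht1, ?_⟩
  · have n1 := matrixL2OpNorm_nonneg Q⁻¹
    have n2 := matrixL2OpNorm_nonneg Q
    have n3 : (0:ℝ) ≤ n := Nat.cast_nonneg n
    have := mul_nonneg (mul_nonneg n1 n2) n3
    linarith
  intro m hm lam hlam
  have key : ∀ i : Fin m, ∃ G : Matrix (Fin n) (Fin n) ℝ,
      (Q * frobeniusMatrix n (∏ k, (X - Polynomial.C (lam i k))) = G * Q) ∧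
      (∀ a : Fin n, ∑ b : Fin n, |G a b| ≤ t) := by
    intro i
    have hl1 : ∀ k : Fin n, v (k:ℕ) ≤ lam i k := by
      intro k
      rw [hveq (k:ℕ) k.isLt]
      have h := (hlam i k).2
      have he : (⟨(k:ℕ)+1, by omega⟩ : Fin (n+1)) = k.succ := by
        apply Fin.ext; simp [Fin.val_succ]
      rw [he]; exact h
    have hl2 : ∀ k : Fin n, lam i k < t := by
      intro k
      have h := (hlam i k).1
      have h2 : μ k.castSucc ≤ μ 0 := hμanti.antitone (Fin.zero_le _)
      linarith
    have hl3 : ∀ k : Fin n, 0 < (k:ℕ) → lam i k ≤ v ((k:ℕ)-1) := by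
      intro k hk
      have h := (hlam i k).1
      rw [hveq ((k:ℕ)-1) (by have := k.isLt; omega)]
      have he : (⟨(k:ℕ)-1+1, by omega⟩ : Fin (n+1)) = k.castSucc := by
        apply Fin.ext; simp only [Fin.coe_castSucc]; omega
      rw [he]; exact h
    obtain ⟨M, hMnn, hMrow, hME⟩ := key_lemma n hn v t hvanti hvpos hvt (lam i) hl1 hl2 hl3
    refine ⟨Matrix.of (fun a b : Fin n =>
      ((Nk v (a:ℕ)).eval t)⁻¹ * M b a * (Nk v (b:ℕ)).eval t), ?_, ?_⟩
    · ext a b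
      rw [Matrix.mul_apply, Matrix.mul_apply]
      have l1 : ∀ k : Fin n, Q a k * frobeniusMatrix n (∏ k, (X - Polynomial.C (lam i k))) k b
          = ((Nk v (a:ℕ)).eval t)⁻¹ *
            ((Nk v (a:ℕ)).coeff (n-1-(k:ℕ))
              * frobeniusMatrix n (∏ k, (X - Polynomial.C (lam i k))) k b) := by
        intro k
        simp only [hQ, hP, Matrix.of_apply]
        ring
      have l2 : ∀ k : Fin n, (Matrix.of (fun a b : Fin n =>
            ((Nk v (a:ℕ)).eval t)⁻¹ * M b a * (Nk v (b:ℕ)).eval t)) a k * Q k b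
          = ((Nk v (a:ℕ)).eval t)⁻¹ * (M k a * (Nk v (k:ℕ)).coeff (n-1-(b:ℕ))) := by
        intro k
        simp only [hQ, hP, Matrix.of_apply]
        have cancel : ∀ (A B c d : ℝ), c ≠ 0 → (A * B * c) * (c⁻¹ * d) = A * (B * d) := by
          intro A B c d hc
          field_simp
        exact cancel _ _ _ _ (hwpos _).ne'
      rw [Finset.sum_congr rfl (fun k _ => l1 k), Finset.sum_congr rfl (fun k _ => l2 k),
        ← Finset.mul_sum, ← Finset.mul_sum, hME a b]
    · intro a
      have habs : ∀ b : Fin n, |(Matrix.of (fun a b : Fin n =>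
            ((Nk v (a:ℕ)).eval t)⁻¹ * M b a * (Nk v (b:ℕ)).eval t)) a b|
          = ((Nk v (a:ℕ)).eval t)⁻¹ * ((Nk v (b:ℕ)).eval t * M b a) := by
        intro b
        simp only [Matrix.of_apply]
        rw [abs_of_nonneg (mul_nonneg (mul_nonneg (inv_nonneg.2 (hwpos _).le)
          (hMnn b a)) (hwpos _).le)]
        ring
      rw [Finset.sum_congr rfl (fun b _ => habs b), ← Finset.mul_sum]
      calc ((Nk v (a:ℕ)).eval t)⁻¹ * ∑ b : Fin n, (Nk v (b:ℕ)).eval t * M b a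
          ≤ ((Nk v (a:ℕ)).eval t)⁻¹ * (t * (Nk v (a:ℕ)).eval t) :=
            mul_le_mul_of_nonneg_left (hMrow a) (inv_nonneg.2 (hwpos _).le)
        _ = t := by
            rw [mul_comm t, ← mul_assoc, inv_mul_cancel₀ (hwpos _).ne', one_mul]
  choose G hG1 hG2 using key
  have hconj := conj_ofFn_prod Q
    (fun i => frobeniusMatrix n (∏ k, (X - Polynomial.C (lam i k)))) G hG1
  set H := (List.ofFn G).prod with hH
  have hFH : (List.ofFn fun i : Fin m => frobeniusMatrix n (∏ k, (X - Polynomial.C (lam i k)))).prod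
      = Q⁻¹ * H * Q := by
    calc (List.ofFn fun i : Fin m => frobeniusMatrix n (∏ k, (X - Polynomial.C (lam i k)))).prod
        = (Q⁻¹ * Q) * (List.ofFn fun i : Fin m =>
            frobeniusMatrix n (∏ k, (X - Polynomial.C (lam i k)))).prod := by
          rw [hQQ', one_mul]
      _ = Q⁻¹ * (Q * (List.ofFn fun i : Fin m =>
            frobeniusMatrix n (∏ k, (X - Polynomial.C (lam i k)))).prod) := by
          rw [mul_assoc]
      _ = Q⁻¹ * (H * Q) := by rw [hconj]
      _ = Q⁻¹ * H * Q := by rw [mul_assoc]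
  rw [hFH]
  have hrow : ∀ a : Fin n, ∑ b : Fin n, |H a b| ≤ t ^ m := by
    intro a
    have h := rowsum_prod ht0.le (List.ofFn G) ?_ a
    · rwa [List.length_ofFn] at h
    · intro A hA a'
      rcases List.mem_ofFn.1 hA with ⟨i, rfl⟩
      exact hG2 i a'
  have hHnorm : matrixL2OpNorm H ≤ n * t ^ m := by
    refine (matrixL2OpNorm_le_sum H).trans ?_
    calc ∑ a : Fin n, ∑ b : Fin n, |H a b| ≤ ∑ _a : Fin n, t ^ m :=
          Finset.sum_le_sum (fun a _ => hrow a)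
      _ = n * t ^ m := by
          rw [Finset.sum_const, Finset.card_univ, Fintype.card_fin, nsmul_eq_mul]
  have n1 := matrixL2OpNorm_nonneg Q⁻¹
  have n2 := matrixL2OpNorm_nonneg Q
  have htm : (0:ℝ) ≤ t ^ m := pow_nonneg ht0.le m
  calc matrixL2OpNorm (Q⁻¹ * H * Q) ≤ matrixL2OpNorm (Q⁻¹ * H) * matrixL2OpNorm Q :=
        matrixL2OpNorm_mul _ _
    _ ≤ (matrixL2OpNorm Q⁻¹ * matrixL2OpNorm H) * matrixL2OpNorm Q :=
        mul_le_mul_of_nonneg_right (matrixL2OpNorm_mul _ _) n2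
    _ ≤ (matrixL2OpNorm Q⁻¹ * (n * t ^ m)) * matrixL2OpNorm Q := by
        exact mul_le_mul_of_nonneg_right (mul_le_mul_of_nonneg_left hHnorm n1) n2
    _ = (matrixL2OpNorm Q⁻¹ * matrixL2OpNorm Q * n) * t ^ m := by ring
    _ ≤ (matrixL2OpNorm Q⁻¹ * matrixL2OpNorm Q * n + 1) * t ^ m := by nlinarith
end

section
/- Let n ≥ 1, let 1 > μ₁ > ⋯ > μ_{n+1} > 0, and let a₁,…,a_{n+1} be nonzero reals such that Σ_{k=1}^{n+1} a_k q(μ_k) = 0 for every real polynomial q of degree less than n. Define the norm ‖q‖_μ = Σ_{k=1}^{n+1} |a_k q(μ_k)| on the space of real polynomials of degree less than n. Fix l ∈ {1,…,n+1}, let p_l(x) = Π_{k≠l}(x − μ_k), and for a polynomial q of degree less than n let r(x) be the remainder of x·q(x) after division by p_l(x). Then ‖r‖_μ ≤ μ₁ ‖q‖_μ. -/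
open Polynomial

/-- **contractivity of the interpolation norm.** Suppose
`1 > μ₁ > ⋯ > μ_{n+1} > 0`, the nonzero reals `a_k` satisfy `Σ a_k q(μ_k) = 0` for every
polynomial `q` of degree `< n`, `‖q‖_μ = Σ |a_k q(μ_k)|`, `p_l(x) = Π_{k≠l}(x - μ_k)`, and
`r` is the remainder of `x·q(x)` modulo `p_l`. Then `‖r‖_μ ≤ μ₁ ‖q‖_μ`. -/
theorem interpolation_norm_contraction (n : ℕ) (hn : 1 ≤ n) (μ : Fin (n + 1) → ℝ)
    (hμ1 : μ 0 < 1) (hμpos : 0 < μ (Fin.last n)) (hμanti : StrictAnti μ)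
    (a : Fin (n + 1) → ℝ) (ha : ∀ k, a k ≠ 0)
    (hsum : ∀ q : Polynomial ℝ, q.degree < n → ∑ k, a k * q.eval (μ k) = 0)
    (l : Fin (n + 1)) (q : Polynomial ℝ) (hq : q.degree < n) :
    ∑ k, |a k * ((X * q) %ₘ (∏ j ∈ Finset.univ.erase l, (X - Polynomial.C (μ j)))).eval (μ k)|
      ≤ μ 0 * ∑ k, |a k * q.eval (μ k)| := by
  set p : Polynomial ℝ := ∏ j ∈ Finset.univ.erase l, (X - Polynomial.C (μ j)) with hp
  have hmonic : p.Monic := monic_prod_of_monic _ _ fun j _ => monic_X_sub_C _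
  set r : Polynomial ℝ := (X * q) %ₘ p with hrdef
  have hcard : (Finset.univ.erase l).card = n := by
    rw [Finset.card_erase_of_mem (Finset.mem_univ l), Finset.card_univ, Fintype.card_fin]
    omega
  have hdegp : p.degree = n := by
    rw [hp, degree_prod]
    simp only [degree_X_sub_C, Finset.sum_const, hcard, nsmul_eq_mul, mul_one]
  have hdegr : r.degree < n := by
    rw [← hdegp]; exact degree_modByMonic_lt _ hmonic
  have hreval : ∀ k ∈ Finset.univ.erase l, r.eval (μ k) = μ k * q.eval (μ k) := by
    intro k hk
    have hpz : p.eval (μ k) = 0 := by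
      rw [hp, eval_prod]
      exact Finset.prod_eq_zero hk (by simp)
    have h := modByMonic_eq_sub_mul_div (X * q) p
    rw [hrdef, h]
    simp [hpz]
  have hμ0 : ∀ k, μ k ≤ μ 0 := fun k => hμanti.antitone (Fin.zero_le k)
  have hμposk : ∀ k, 0 < μ k := fun k => lt_of_lt_of_le hμpos (hμanti.antitone (Fin.le_last k))
  have hsr := hsum r hdegr
  have hsq := hsum q hq
  rw [← Finset.add_sum_erase Finset.univ (fun k => a k * r.eval (μ k)) (Finset.mem_univ l)]
    at hsr
  rw [← Finset.add_sum_erase Finset.univ (fun k => a k * q.eval (μ k)) (Finset.mem_univ l)]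
    at hsq
  have hsr' : a l * r.eval (μ l)
      = - ∑ k ∈ Finset.univ.erase l, a k * (μ k * q.eval (μ k)) := by
    rw [Finset.sum_congr rfl fun k hk => by rw [hreval k hk]] at hsr
    linarith
  have key : a l * r.eval (μ l) - μ 0 * (a l * q.eval (μ l))
      = ∑ k ∈ Finset.univ.erase l, ((μ 0 - μ k) * (a k * q.eval (μ k))) := by
    rw [hsr']
    have h2 : μ 0 * (a l * q.eval (μ l))
        = - ∑ k ∈ Finset.univ.erase l, μ 0 * (a k * q.eval (μ k)) := by
      rw [← Finset.mul_sum]; nlinarith [hsq]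
    rw [h2, neg_sub_neg, ← Finset.sum_sub_distrib]
    exact Finset.sum_congr rfl fun k _ => by ring
  have hbound : |a l * r.eval (μ l)|
      ≤ μ 0 * |a l * q.eval (μ l)|
        + ∑ k ∈ Finset.univ.erase l, (μ 0 - μ k) * |a k * q.eval (μ k)| := by
    have h1 : |a l * r.eval (μ l)|
        ≤ |a l * r.eval (μ l) - μ 0 * (a l * q.eval (μ l))| + |μ 0 * (a l * q.eval (μ l))| := by
      have := abs_sub_abs_le_abs_sub (a l * r.eval (μ l)) (μ 0 * (a l * q.eval (μ l)))
      linarith [abs_nonneg (μ 0 * (a l * q.eval (μ l)))]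
    rw [key] at h1
    have h2 : |∑ k ∈ Finset.univ.erase l, ((μ 0 - μ k) * (a k * q.eval (μ k)))|
        ≤ ∑ k ∈ Finset.univ.erase l, (μ 0 - μ k) * |a k * q.eval (μ k)| := by
      refine (Finset.abs_sum_le_sum_abs _ _).trans (Finset.sum_le_sum fun k _ => ?_)
      rw [abs_mul, abs_of_nonneg (by linarith [hμ0 k])]
    have h3 : |μ 0 * (a l * q.eval (μ l))| = μ 0 * |a l * q.eval (μ l)| := by
      rw [abs_mul, abs_of_nonneg (le_of_lt (hμposk 0))]
    linarith
  calc ∑ k, |a k * r.eval (μ k)|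
      = |a l * r.eval (μ l)| + ∑ k ∈ Finset.univ.erase l, |a k * r.eval (μ k)| :=
        (Finset.add_sum_erase Finset.univ (fun k => |a k * r.eval (μ k)|)
          (Finset.mem_univ l)).symm
    _ = |a l * r.eval (μ l)|
          + ∑ k ∈ Finset.univ.erase l, μ k * |a k * q.eval (μ k)| := by
        congr 1
        refine Finset.sum_congr rfl fun k hk => ?_
        rw [hreval k hk, abs_mul, abs_mul, abs_of_nonneg (le_of_lt (hμposk k)), abs_mul]
        ring
    _ ≤ (μ 0 * |a l * q.eval (μ l)|
          + ∑ k ∈ Finset.univ.erase l, (μ 0 - μ k) * |a k * q.eval (μ k)|)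
          + ∑ k ∈ Finset.univ.erase l, μ k * |a k * q.eval (μ k)| :=
        add_le_add_left hbound _
    _ = μ 0 * ∑ k, |a k * q.eval (μ k)| := by
        rw [← Finset.add_sum_erase Finset.univ (fun k => |a k * q.eval (μ k)|)
          (Finset.mem_univ l), mul_add, Finset.mul_sum, add_assoc, ← Finset.sum_add_distrib]
        congr 1
        exact Finset.sum_congr rfl fun k _ => by ring
end

section
/- Let I be a finite index set and let x_k ∈ ℝ and s_k ∈ [0,1] for k ∈ I. Then Σ_{k∈I} |s_k x_k| + |Σ_{k∈I} s_k x_k| ≤ Σ_{k∈I} |x_k| + |Σ_{k∈I} x_k|. -/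
/-- For reals `x_k` and weights `s_k ∈ [0,1]`, `k` in a finite index set,
`Σ |s_k x_k| + |Σ s_k x_k| ≤ Σ |x_k| + |Σ x_k|`. -/
theorem abs_sum_weighted_le {ι : Type*} (I : Finset ι) (x s : ι → ℝ)
    (hs : ∀ k ∈ I, s k ∈ Set.Icc (0 : ℝ) 1) :
    (∑ k ∈ I, |s k * x k|) + |∑ k ∈ I, s k * x k| ≤
      (∑ k ∈ I, |x k|) + |∑ k ∈ I, x k| := by
  have h1 : ∑ k ∈ I, |s k * x k| = ∑ k ∈ I, s k * |x k| := by
    refine Finset.sum_congr rfl fun k hk => ?_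
    rw [abs_mul, abs_of_nonneg (hs k hk).1]
  have h2 : |∑ k ∈ I, s k * x k| ≤ |∑ k ∈ I, x k| + ∑ k ∈ I, (1 - s k) * |x k| := by
    have : ∑ k ∈ I, s k * x k = (∑ k ∈ I, x k) - ∑ k ∈ I, (1 - s k) * x k := by
      rw [← Finset.sum_sub_distrib]
      exact Finset.sum_congr rfl fun k _ => by ring
    rw [this]
    refine (abs_sub _ _).trans ?_
    gcongr
    refine (Finset.abs_sum_le_sum_abs _ _).trans ?_
    refine Finset.sum_le_sum fun k hk => ?_
    rw [abs_mul, abs_of_nonneg (by linarith [(hs k hk).2] : (0:ℝ) ≤ 1 - s k)]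
  have h3 : ∑ k ∈ I, s k * |x k| + ∑ k ∈ I, (1 - s k) * |x k| = ∑ k ∈ I, |x k| := by
    rw [← Finset.sum_add_distrib]; ring_nf
  rw [h1]; linarith
end

section
/- Let α > 0 and let g(t) = Σ_{k=1}^N a_k/(t − i w_k) with a_k ∈ ℂ nonzero and Re w_k ≠ Re w_l for k ≠ l. Then for every θ ∈ ℝ, the N×N matrix B with entries B_{j,s} = m_s(θ − j), for j = 0,…,N−1 (row index) and s = 0,…,N−1 (column index), satisfies det B ≠ 0. -/
open Complex Real

/-- `A_{k,s} = (-1)^s Σ_{j₁<⋯<j_s, j_l ≠ k} e^{(2π/α)(w_{j₁}+⋯+w_{j_s})}`. -/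
noncomputable def gaborAks (N : ℕ) (w : Fin N → ℂ) (α : ℝ) (k : Fin N) (s : ℕ) : ℂ :=
  (-1) ^ s * ∑ S ∈ Finset.powersetCard s (Finset.univ.erase k),
    Complex.exp (((2 * Real.pi / α : ℝ) : ℂ) * ∑ j ∈ S, w j)

/-- `m_s(ξ) = Σ_{k=1}^N a_k A_{k,s} e^{2πξ w_k}`. -/
noncomputable def gaborM (N : ℕ) (a w : Fin N → ℂ) (α : ℝ) (s : ℕ) (ξ : ℝ) : ℂ :=
  ∑ k, a k * gaborAks N w α k s * Complex.exp (((2 * Real.pi * ξ : ℝ) : ℂ) * w k)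

/-- Generating identity for signed elementary symmetric sums. -/
lemma gabor_esymm_sum {ι : Type*} [DecidableEq ι] (T : Finset ι) (y : ι → ℂ) (x : ℂ) :
    ∑ s ∈ Finset.range (T.card + 1), ∑ S ∈ Finset.powersetCard s T,
        (-x) ^ s * ∏ j ∈ S, y j
      = ∏ j ∈ T, (1 - x * y j) := by
  have h : ∀ j ∈ T, (1 - x * y j) = (-(x * y j)) + 1 := by intro j _; ring
  rw [Finset.prod_congr rfl h, Finset.prod_add, Finset.sum_powerset]
  refine Finset.sum_congr rfl fun s hs => Finset.sum_congr rfl fun S hS => ?_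
  obtain ⟨hsub, hcard⟩ := Finset.mem_powersetCard.mp hS
  simp only [Finset.prod_const, mul_one, Finset.prod_const_one]
  rw [← hcard, ← Finset.prod_const, ← Finset.prod_mul_distrib]
  simp [neg_mul]

/-- Injectivity of `k ↦ exp (r * w k)` when `r ≠ 0` and the real parts of `w` are distinct. -/
lemma gabor_exp_inj (N : ℕ) (w : Fin N → ℂ)
    (hww : ∀ k l, k ≠ l → (w k).re ≠ (w l).re) (r : ℝ) (hr : r ≠ 0) :
    Function.Injective (fun k => Complex.exp ((r : ℂ) * w k)) := by
  intro k l h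
  by_contra hkl
  apply hww k l hkl
  have habs := congrArg (‖·‖) h
  simp only [Complex.norm_exp] at habs
  have := Real.exp_injective habs
  rw [Complex.re_ofReal_mul, Complex.re_ofReal_mul] at this
  exact mul_left_cancel₀ hr this

/-- For `a_k ≠ 0` and pairwise distinct `Re w_k`, the `N × N` matrix
`B_{j,s} = m_s(θ - j)` is nonsingular for every `θ ∈ ℝ`. -/
theorem gaborM_block_det_ne_zero (N : ℕ) (α : ℝ) (hα : 0 < α)
    (a w : Fin N → ℂ) (ha : ∀ k, a k ≠ 0)
    (hww : ∀ k l, k ≠ l → (w k).re ≠ (w l).re)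
    (θ : ℝ) (B : Matrix (Fin N) (Fin N) ℂ)
    (hB : ∀ j s : Fin N, B j s = gaborM N a w α (s : ℕ) (θ - (j : ℕ))) :
    B.det ≠ 0 := by
  rcases Nat.eq_zero_or_pos N with hN | hN
  · subst hN
    rw [Matrix.det_isEmpty]
    exact one_ne_zero
  classical
  set y : Fin N → ℂ := fun k => Complex.exp (((2 * Real.pi / α : ℝ) : ℂ) * w k) with hy
  set x : Fin N → ℂ := fun k => Complex.exp (((-(2 * Real.pi) : ℝ) : ℂ) * w k) with hx
  set c : Fin N → ℂ := fun k => a k * Complex.exp (((2 * Real.pi * θ : ℝ) : ℂ) * w k) with hc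
  have hyinj : Function.Injective y :=
    gabor_exp_inj N w hww _ (by positivity)
  have hxinj : Function.Injective x :=
    gabor_exp_inj N w hww _ (by
      have := Real.pi_pos
      intro h; nlinarith)
  have hy0 : ∀ k, y k ≠ 0 := fun k => Complex.exp_ne_zero _
  have hc0 : ∀ k, c k ≠ 0 := fun k => mul_ne_zero (ha k) (Complex.exp_ne_zero _)
  -- the matrices
  set P : Matrix (Fin N) (Fin N) ℂ := Matrix.of fun j k => c k * x k ^ (j : ℕ) with hP
  set M : Matrix (Fin N) (Fin N) ℂ := Matrix.of fun k s => gaborAks N w α k (s : ℕ) with hM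
  -- B = P * M
  have hBPM : B = P * M := by
    ext j s
    rw [hB, Matrix.mul_apply]
    unfold gaborM
    refine Finset.sum_congr rfl fun k _ => ?_
    have hexp : Complex.exp (((2 * Real.pi * (θ - (j : ℕ)) : ℝ) : ℂ) * w k)
        = Complex.exp (((2 * Real.pi * θ : ℝ) : ℂ) * w k) * x k ^ (j : ℕ) := by
      rw [hx]
      simp only
      rw [← Complex.exp_nat_mul, ← Complex.exp_add]
      congr 1
      push_cast
      ring
    rw [hexp, hP, hM]
    simp only [Matrix.of_apply]
    ring
  -- det P ≠ 0
  have hPdet : P.det ≠ 0 := by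
    have : P = (Matrix.vandermonde x).transpose * Matrix.diagonal c := by
      ext j k
      rw [Matrix.mul_diagonal]
      simp [hP, Matrix.vandermonde, mul_comm]
    rw [this, Matrix.det_mul, Matrix.det_transpose, Matrix.det_diagonal]
    exact mul_ne_zero (Matrix.det_vandermonde_ne_zero_iff.mpr hxinj)
      (Finset.prod_ne_zero_iff.mpr fun k _ => hc0 k)
  -- det M ≠ 0
  have hMdet : M.det ≠ 0 := by
    set W : Matrix (Fin N) (Fin N) ℂ :=
      (Matrix.vandermonde (fun k => (y k)⁻¹)).transpose with hW
    have hWdet : W.det ≠ 0 := by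
      rw [hW, Matrix.det_transpose]
      refine Matrix.det_vandermonde_ne_zero_iff.mpr ?_
      intro k l h
      exact hyinj (inv_injective h)
    -- key computation: row sums of M against powers of (y k')⁻¹
    have hsum : ∀ k : Fin N, ∀ z : ℂ,
        ∑ s : Fin N, gaborAks N w α k (s : ℕ) * z ^ (s : ℕ)
          = ∏ j ∈ Finset.univ.erase k, (1 - z * y j) := by
      intro k z
      have hcard : (Finset.univ.erase k).card + 1 = N := by
        rw [Finset.card_erase_of_mem (Finset.mem_univ k), Finset.card_univ,
          Fintype.card_fin]
        omega
      have hrange : Finset.range N = Finset.range ((Finset.univ.erase k).card + 1) := by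
        rw [hcard]
      rw [Fin.sum_univ_eq_sum_range (fun s => gaborAks N w α k s * z ^ s) N, hrange,
        ← gabor_esymm_sum (Finset.univ.erase k) y z]
      refine Finset.sum_congr rfl fun s hs => ?_
      unfold gaborAks
      rw [Finset.mul_sum, Finset.sum_mul]
      refine Finset.sum_congr rfl fun S hS => ?_
      have hprod : Complex.exp (((2 * Real.pi / α : ℝ) : ℂ) * ∑ j ∈ S, w j)
          = ∏ j ∈ S, y j := by
        rw [Finset.mul_sum, Complex.exp_sum]
      rw [hprod, neg_pow]
      ring
    have hMW : M * W = Matrix.diagonal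
        (fun k => ∏ j ∈ Finset.univ.erase k, (1 - (y k)⁻¹ * y j)) := by
      ext k k'
      rw [Matrix.mul_apply]
      simp only [hM, hW, Matrix.of_apply, Matrix.transpose_apply, Matrix.vandermonde]
      rw [hsum k ((y k')⁻¹)]
      rcases eq_or_ne k k' with rfl | hkk'
      · simp [Matrix.diagonal]
      · rw [Matrix.diagonal_apply_ne _ hkk']
        refine Finset.prod_eq_zero (Finset.mem_erase.mpr ⟨Ne.symm hkk', Finset.mem_univ k'⟩) ?_
        rw [inv_mul_cancel₀ (hy0 k'), sub_self]
    have hdiag : (M * W).det ≠ 0 := by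
      rw [hMW, Matrix.det_diagonal]
      refine Finset.prod_ne_zero_iff.mpr fun k _ => Finset.prod_ne_zero_iff.mpr
        fun j hj => ?_
      rw [sub_ne_zero]
      intro h
      have : y k = y j := by
        rw [(inv_mul_eq_one₀ (hy0 k)).mp h.symm]
      exact (Finset.mem_erase.mp hj).1 (hyinj this.symm)
    rw [Matrix.det_mul] at hdiag
    exact left_ne_zero_of_mul hdiag
  rw [hBPM, Matrix.det_mul]
  exact mul_ne_zero hPdet hMdet
end
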